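/- Let u : ℝ → ℝ be three times continuously differentiable, Δt > 0, and t_k = t₀ + kΔt for k = 0,…,3. Then u(t₃) − 3u(t₂) + 3u(t₁) − u(t₀) = (Δt²/2)(∫_{t₂}^{t₃} u''' dt + ∫_{t₀}^{t₁} u''' dt) − Δt(∫_{t₁}^{t₃}(t − t₂)u''' dt − ∫_{t₀}^{t₂}(t − t₁)u''' dt) + (1/2)(∫_{t₂}^{t₃}(t − t₂)²u''' dt − ∫_{t₁}^{t₂}(t − t₂)²u''' dt) − (1/2)(∫_{t₁}^{t₂}(t − t₁)²u''' dt − ∫_{t₀}^{t₁}(t − t₁)²u''' dt). -/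

import Mathlib

open intervalIntegral

-- integration by parts helpers
lemma ibp0 (g g' : ℝ → ℝ) (hg : ∀ x, HasDerivAt g (g' x) x) (hg' : Continuous g')
    (a b : ℝ) : ∫ t in a..b, g' t = g b - g a :=
  intervalIntegral.integral_eq_sub_of_hasDerivAt (fun x _ => hg x)
    (hg'.intervalIntegrable a b)

lemma ibp1 (g g' : ℝ → ℝ) (hg : ∀ x, HasDerivAt g (g' x) x) (hg' : Continuous g')
    (hgc : Continuous g) (a b c : ℝ) :
    ∫ t in a..b, (t - c) * g' t
      = (b - c) * g b - (a - c) * g a - ∫ t in a..b, g t := by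
  have h := intervalIntegral.integral_mul_deriv_eq_deriv_mul
    (u := fun t => t - c) (u' := fun _ => (1:ℝ)) (v := g) (v' := g')
    (fun x _ => (hasDerivAt_id x).sub_const c) (fun x _ => hg x)
    (intervalIntegrable_const) (hg'.intervalIntegrable a b)
  simpa using h

lemma ibp2 (g g' : ℝ → ℝ) (hg : ∀ x, HasDerivAt g (g' x) x) (hg' : Continuous g')
    (hgc : Continuous g) (a b c : ℝ) :
    ∫ t in a..b, (t - c)^2 * g' t
      = (b - c)^2 * g b - (a - c)^2 * g a - 2 * ∫ t in a..b, (t - c) * g t := by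
  have h := intervalIntegral.integral_mul_deriv_eq_deriv_mul
    (u := fun t => (t - c)^2) (u' := fun t => 2 * (t - c)) (v := g) (v' := g')
    (fun x _ => by simpa [mul_comm, mul_assoc] using (((hasDerivAt_id x).sub_const c).fun_pow 2))
    (fun x _ => hg x)
    ((continuous_const.mul (continuous_id.sub continuous_const)).intervalIntegrable a b)
    (hg'.intervalIntegrable a b)
  rw [h, ← intervalIntegral.integral_const_mul]
  congr 1
  apply intervalIntegral.integral_congr
  intro x _
  ring

theorem third_difference_integral_representation
    (u : ℝ → ℝ) (hu : ContDiff ℝ 3 u) (t₀ Δt : ℝ) (hΔt : 0 < Δt) :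
    u (t₀ + 3*Δt) - 3 * u (t₀ + 2*Δt) + 3 * u (t₀ + 1*Δt) - u t₀ =
      (Δt^2/2) * ((∫ t in (t₀ + 2*Δt)..(t₀ + 3*Δt), iteratedDeriv 3 u t)
          + ∫ t in t₀..(t₀ + 1*Δt), iteratedDeriv 3 u t)
        - Δt * ((∫ t in (t₀ + 1*Δt)..(t₀ + 3*Δt), (t - (t₀ + 2*Δt)) * iteratedDeriv 3 u t)
          - ∫ t in t₀..(t₀ + 2*Δt), (t - (t₀ + 1*Δt)) * iteratedDeriv 3 u t)
        + (1/2) * ((∫ t in (t₀ + 2*Δt)..(t₀ + 3*Δt), (t - (t₀ + 2*Δt))^2 * iteratedDeriv 3 u t)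
          - ∫ t in (t₀ + 1*Δt)..(t₀ + 2*Δt), (t - (t₀ + 2*Δt))^2 * iteratedDeriv 3 u t)
        - (1/2) * ((∫ t in (t₀ + 1*Δt)..(t₀ + 2*Δt), (t - (t₀ + 1*Δt))^2 * iteratedDeriv 3 u t)
          - ∫ t in t₀..(t₀ + 1*Δt), (t - (t₀ + 1*Δt))^2 * iteratedDeriv 3 u t) := by
  set f1 := deriv u with hf1
  set f2 := deriv f1 with hf2
  set f3 := deriv f2 with hf3
  have hu' : ContDiff ℝ 2 f1 := by
    rw [hf1]
    exact (contDiff_succ_iff_deriv.mp (show ContDiff ℝ (2+1) u from hu)).2.2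
  have hu'' : ContDiff ℝ 1 f2 := by
    rw [hf2]
    exact (contDiff_succ_iff_deriv.mp (show ContDiff ℝ (1+1) f1 from hu')).2.2
  have hdu : ∀ x, HasDerivAt u (f1 x) x := fun x =>
    (hu.differentiable (by norm_num)).differentiableAt.hasDerivAt
  have hdu1 : ∀ x, HasDerivAt f1 (f2 x) x := fun x =>
    (hu'.differentiable (by norm_num)).differentiableAt.hasDerivAt
  have hdu2 : ∀ x, HasDerivAt f2 (f3 x) x := fun x =>
    (hu''.differentiable (by norm_num)).differentiableAt.hasDerivAt
  have hcu : Continuous u := hu.continuous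
  have hcf1 : Continuous f1 := hu'.continuous
  have hcf2 : Continuous f2 := hu''.continuous
  have hcf3 : Continuous f3 := by
    rw [hf3]
    exact ((contDiff_succ_iff_deriv.mp (show ContDiff ℝ (0+1) f2 from hu'')).2.2).continuous
  have hiter : iteratedDeriv 3 u = f3 := by
    rw [hf3, hf2, hf1]
    simp [iteratedDeriv_succ, iteratedDeriv_zero]
  rw [hiter]
  -- reduce all integrals of f3
  have L0 : ∀ a b : ℝ, ∫ t in a..b, f3 t = f2 b - f2 a := ibp0 f2 f3 hdu2 hcf3
  have L1u : ∀ a b c : ℝ, ∫ t in a..b, (t - c) * f2 t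
      = (b - c) * f1 b - (a - c) * f1 a - (u b - u a) := by
    intro a b c
    rw [ibp1 f1 f2 hdu1 hcf2 hcf1, ibp0 u f1 hdu hcf1]
  have L1 : ∀ a b c : ℝ, ∫ t in a..b, (t - c) * f3 t
      = (b - c) * f2 b - (a - c) * f2 a - (f1 b - f1 a) := by
    intro a b c
    rw [ibp1 f2 f3 hdu2 hcf3 hcf2, ibp0 f1 f2 hdu1 hcf2]
  have L2 : ∀ a b c : ℝ, ∫ t in a..b, (t - c)^2 * f3 t
      = (b - c)^2 * f2 b - (a - c)^2 * f2 a
        - 2 * ((b - c) * f1 b - (a - c) * f1 a - (u b - u a)) := by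
    intro a b c
    rw [ibp2 f2 f3 hdu2 hcf3 hcf2, L1u]
  rw [L0, L0, L1, L1, L2, L2, L2, L2]
  ring
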